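/- Let C be a d-clutter on a finite vertex set V such that the circuits of the complement C̄ admit an admissible order. Then: (i) the circuits of the complement of the ascent C^+ (that is, the (d+2)-subsets of V that are not cliques of C) admit an admissible order; (ii) for each F ∈ SMS(C^+), the circuits of the complement of C − F, namely C̄ ∪ {F}, admit an admissible order; and (iii) for each v ∈ V, the circuits of the complement of C − v (taken within the (d+1)-subsets of V \ {v}) admit an admissible order. -/

import Mathlib

namespace ClutterPaper

variable {α : Type*} [DecidableEq α]

/-- `C` is a uniform clutter on vertex set `V` all of whose circuits have cardinality `c`
(i.e. a `(c-1)`-dimensional uniform clutter). -/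
def IsClutter (V : Finset α) (c : ℕ) (C : Finset (Finset α)) : Prop :=
  ∀ F ∈ C, F ⊆ V ∧ F.card = c

/-- The complement clutter `C̄`: all `c`-subsets of `V` not in `C`. -/
def compClutter (V : Finset α) (c : ℕ) (C : Finset (Finset α)) : Finset (Finset α) :=
  V.powersetCard c \ C

/-- `C^∨ = { V \ F | F ∈ C̄ }`. -/
def clutterDual (V : Finset α) (c : ℕ) (C : Finset (Finset α)) : Finset (Finset α) :=
  (compClutter V c C).image fun F => V \ F

/-- `A` is a clique of the clutter `C` (with circuit cardinality `c`) on vertex set `V`: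
all `c`-subsets of `A` are circuits. -/
def IsClique (V : Finset α) (c : ℕ) (C : Finset (Finset α)) (A : Finset α) : Prop :=
  A ⊆ V ∧ ∀ F ⊆ A, F.card = c → F ∈ C

/-- The closed neighborhood `N_C[e] = e ∪ { v ∈ V | e ∪ {v} ∈ C }`. -/
def closedNbhd (V : Finset α) (C : Finset (Finset α)) (e : Finset α) : Finset α :=
  e ∪ V.filter fun v => insert v e ∈ C

/-- `e` is a maximal subcircuit of the clutter `C` with circuit cardinality `c`:
`e` has cardinality `c - 1` and is contained in some circuit. -/
def IsMS (c : ℕ) (C : Finset (Finset α)) (e : Finset α) : Prop :=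
  e.card + 1 = c ∧ ∃ F ∈ C, e ⊆ F

/-- `e` is a simplicial maximal subcircuit: a maximal subcircuit whose closed
neighborhood is a clique. -/
def IsSMS (V : Finset α) (c : ℕ) (C : Finset (Finset α)) (e : Finset α) : Prop :=
  IsMS c C e ∧ IsClique V c C (closedNbhd V C e)

/-- `e` is a free maximal subcircuit: contained in exactly one circuit. -/
def IsFreeMS (c : ℕ) (C : Finset (Finset α)) (e : Finset α) : Prop :=
  e.card + 1 = c ∧ ∃! F, F ∈ C ∧ e ⊆ F

/-- Deletion `C − e` of a maximal subcircuit: the circuits not containing `e`. -/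
def delMS (C : Finset (Finset α)) (e : Finset α) : Finset (Finset α) :=
  C.filter fun F => ¬ e ⊆ F

/-- Deletion of a vertex: circuits (or faces) not containing `v`. -/
def delVert (C : Finset (Finset α)) (v : α) : Finset (Finset α) :=
  C.filter fun F => v ∉ F

/-- Chordality of a uniform clutter (circuit cardinality `c`) on `V`: there is a sequence of
deletions of simplicial maximal subcircuits ending in the clutter with no circuits. -/
inductive Chordal (V : Finset α) (c : ℕ) : Finset (Finset α) → Prop
  | empty : Chordal V c ∅
  | step {C : Finset (Finset α)} (e : Finset α) :
      IsSMS V c C e → Chordal V c (delMS C e) → Chordal V c C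

/-- The ascent `C⁺` of a clutter with circuit cardinality `c`: all `(c+1)`-subsets of `V`
that are cliques of `C`. -/
def ascent (V : Finset α) (c : ℕ) (C : Finset (Finset α)) : Finset (Finset α) :=
  (V.powersetCard (c + 1)).filter fun A => A.powersetCard c ⊆ C

/-- The simplicial complex `⟨D⟩` generated by a clutter `D`: all subsets of its elements. -/
def complexOf (D : Finset (Finset α)) : Finset (Finset α) :=
  D.biUnion Finset.powerset

/-- A family of finsets is a simplicial complex if it is downward closed. -/
def IsComplex (Δ : Finset (Finset α)) : Prop :=
  ∀ F ∈ Δ, ∀ G ⊆ F, G ∈ Δ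

/-- The facets (maximal faces) of a simplicial complex. -/
def facets (Δ : Finset (Finset α)) : Finset (Finset α) :=
  Δ.filter fun F => ∀ G ∈ Δ, F ⊆ G → F = G

/-- `link_Δ(v) = { F \ {v} | v ∈ F ∈ Δ }`. -/
def link (Δ : Finset (Finset α)) (v : α) : Finset (Finset α) :=
  (Δ.filter fun F => v ∈ F).image fun F => F.erase v

/-- `v` is a shedding vertex of `Δ`: no face of `link_Δ(v)` is a facet of `Δ − v`. -/
def Shedding (Δ : Finset (Finset α)) (v : α) : Prop :=
  ∀ F ∈ link Δ v, F ∉ facets (delVert Δ v)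

/-- Alexander dual of a simplicial complex on vertex set `V`:
`Δ^∨ = { V \ F | F ⊆ V, F ∉ Δ }`. -/
def alexDual (V : Finset α) (Δ : Finset (Finset α)) : Finset (Finset α) :=
  (V.powerset.filter fun F => F ∉ Δ).image fun F => V \ F

/-- `Δ` is pure with all facets of cardinality `c` (dimension `c - 1`), and nonempty. -/
def PureDim (Δ : Finset (Finset α)) (c : ℕ) : Prop :=
  Δ.Nonempty ∧ ∀ F ∈ facets Δ, F.card = c

/-- Vertex decomposability of a simplicial complex. -/
inductive VDecomp : Finset (Finset α) → Prop
  | simplex {Δ : Finset (Finset α)} : (facets Δ).card = 1 → VDecomp Δ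
  | shed {Δ : Finset (Finset α)} (v : α) : Shedding Δ v →
      VDecomp (link Δ v) → VDecomp (delVert Δ v) → VDecomp Δ

/-- The vertex set of a clutter (or of the complex it generates). -/
def vertexSet (Ω : Finset (Finset α)) : Finset α :=
  Ω.biUnion id

/-- `Ω` (given by its set of facets, each of cardinality `d+1`) is a `d`-cycle:
nonempty, pure of dimension `d`, `d`-path connected, and every `(d-1)`-dimensional
face lies in an even number of `d`-faces. -/
def IsCycle (d : ℕ) (Ω : Finset (Finset α)) : Prop :=
  Ω.Nonempty ∧ (∀ F ∈ Ω, F.card = d + 1) ∧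
    (∀ F ∈ Ω, ∀ G ∈ Ω,
      Relation.ReflTransGen (fun A B => A ∈ Ω ∧ B ∈ Ω ∧ (A ∩ B).card = d) F G) ∧
    ∀ e : Finset α, e.card = d → Even ((Ω.filter fun F => e ⊆ F).card)

/-- A face-minimal `d`-cycle: no `d`-cycle has a strictly smaller set of `d`-faces. -/
def FaceMinimalCycle (d : ℕ) (Ω : Finset (Finset α)) : Prop :=
  IsCycle d Ω ∧ ∀ Ω' : Finset (Finset α), IsCycle d Ω' → Ω' ⊆ Ω → Ω' = Ω

/-- `Ω` is `d`-complete: it contains every `(d+1)`-subset of its vertex set. -/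
def DComplete (d : ℕ) (Ω : Finset (Finset α)) : Prop :=
  ∀ F ⊆ vertexSet Ω, F.card = d + 1 → F ∈ Ω

/-- The complex `⟨C⟩` generated by the `d`-dimensional clutter `C` is `d`-chorded. -/
def Chorded (d : ℕ) (C : Finset (Finset α)) : Prop :=
  ∀ Ω : Finset (Finset α), FaceMinimalCycle d Ω → Ω ⊆ C → ¬ DComplete d Ω →
    ∃ (k : ℕ) (Ωs : Fin k → Finset (Finset α)), 2 ≤ k ∧
      (∀ i, IsCycle d (Ωs i) ∧ Ωs i ⊆ C) ∧
      (∀ F ∈ Ω, ∃ i, F ∈ Ωs i) ∧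
      (∀ F ∈ Ω, Odd ((Finset.univ.filter fun i => F ∈ Ωs i).card)) ∧
      (∀ F : Finset α, (∃ i, F ∈ Ωs i) → F ∉ Ω →
        Even ((Finset.univ.filter fun i => F ∈ Ωs i).card)) ∧
      ∀ i, vertexSet (Ωs i) ⊂ vertexSet Ω

/-- The circuits of `D` admit an admissible order. -/
def HasAdmissibleOrder (D : Finset (Finset α)) : Prop :=
  ∃ (t : ℕ) (F : Fin t → Finset α), Function.Injective F ∧
    (∀ G, G ∈ D ↔ ∃ i, F i = G) ∧
    ∀ i j : Fin t, j < i →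
      ∃ l ∈ F j \ F i, ∃ k : Fin t, k < i ∧ F k \ F i = {l}

/-- Contraction `D/v` of a (not necessarily uniform) clutter: the minimal sets of
`{ e \ {v} | e ∈ D }`. -/
def contractAux (D : Finset (Finset α)) (v : α) : Finset (Finset α) :=
  D.image fun e => e.erase v

def contract (D : Finset (Finset α)) (v : α) : Finset (Finset α) :=
  (contractAux D v).filter fun e => ∀ f ∈ contractAux D v, f ⊆ e → f = e

/-- `D` has a simplicial vertex (trivially true if `D` has no vertices). -/
def HasSimpVertex (D : Finset (Finset α)) : Prop :=
  vertexSet D = ∅ ∨ ∃ v ∈ vertexSet D, ∀ e₁ ∈ D, ∀ e₂ ∈ D, v ∈ e₁ → v ∈ e₂ →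
    ∃ e₃ ∈ D, e₃ ⊆ (e₁ ∪ e₂).erase v

/-- `D` is W-chordal: every clutter obtained from `D` by a sequence of vertex deletions
and contractions has a simplicial vertex. -/
def WChordal (D : Finset (Finset α)) : Prop :=
  ∀ D' : Finset (Finset α),
    Relation.ReflTransGen (fun X Y => ∃ v, Y = delVert X v ∨ Y = contract X v) D D' →
    HasSimpVertex D'

section AdmissibleHelpers

lemma mixed_lt' {a a' b b' c : ℕ} (hb : b < c) (h : a < a') : a * c + b < a' * c + b' :=
  calc a * c + b < a * c + c := by omega
    _ = (a + 1) * c := by ring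
    _ ≤ a' * c := Nat.mul_le_mul_right c h
    _ ≤ a' * c + b' := Nat.le_add_right _ _

lemma hasAdmissibleOrder_of_rank (D : Finset (Finset α)) (r : Finset α → ℕ)
    (hinj : ∀ A ∈ D, ∀ B ∈ D, r A = r B → A = B)
    (hadm : ∀ A ∈ D, ∀ B ∈ D, r B < r A →
      ∃ l ∈ B \ A, ∃ K ∈ D, r K < r A ∧ K \ A = {l}) :
    HasAdmissibleOrder D := by
  classical
  set L : List (Finset α) := D.toList.mergeSort (fun A B => decide (r A ≤ r B)) with hL
  have hperm : L.Perm D.toList := List.mergeSort_perm _ _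
  have hnodup : L.Nodup := hperm.nodup_iff.mpr D.nodup_toList
  have hmemL : ∀ G, G ∈ L ↔ G ∈ D := by
    intro G; rw [hperm.mem_iff, Finset.mem_toList]
  have hsorted : L.Pairwise (fun a b => r a ≤ r b) := by
    have := List.pairwise_mergeSort (le := fun A B => decide (r A ≤ r B))
      (fun a b c hab hbc => by simp only [decide_eq_true_eq] at *; omega)
      (fun a b => by simpa using Nat.le_total (r a) (r b)) D.toList
    simpa using this
  refine ⟨L.length, L.get, List.nodup_iff_injective_get.mp hnodup, ?_, ?_⟩
  · intro G
    rw [← hmemL, List.mem_iff_get]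
  · intro i j hji
    have hA : L.get i ∈ D := (hmemL _).mp (L.get_mem _)
    have hB : L.get j ∈ D := (hmemL _).mp (L.get_mem _)
    have hle : r (L.get j) ≤ r (L.get i) :=
      (List.Pairwise.rel_get_of_lt hsorted hji)
    have hne : L.get j ≠ L.get i := fun h =>
      absurd (List.nodup_iff_injective_get.mp hnodup h) (Fin.ne_of_lt hji)
    have hlt : r (L.get j) < r (L.get i) :=
      lt_of_le_of_ne hle (fun h => hne (hinj _ hB _ hA h))
    obtain ⟨l, hl, K, hK, hrK, hKA⟩ := hadm _ hA _ hB hlt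
    obtain ⟨k, hk⟩ := List.mem_iff_get.mp ((hmemL K).mpr hK)
    refine ⟨l, hl, k, ?_, by rw [hk]; exact hKA⟩
    by_contra hik
    push_neg at hik
    rcases lt_or_eq_of_le hik with h | h
    · exact absurd (List.Pairwise.rel_get_of_lt hsorted h) (by rw [hk]; omega)
    · subst h; rw [hk] at hrK; omega

lemma exists_rank_of_hasAdmissibleOrder (D : Finset (Finset α))
    (h : HasAdmissibleOrder D) :
    ∃ r : Finset α → ℕ, (∀ A ∈ D, ∀ B ∈ D, r A = r B → A = B) ∧
      ∀ A ∈ D, ∀ B ∈ D, r B < r A →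
        ∃ l ∈ B \ A, ∃ K ∈ D, r K < r A ∧ K \ A = {l} := by
  classical
  obtain ⟨t, F, hFinj, hmem, hadm⟩ := h
  set r : Finset α → ℕ := fun G => if h : ∃ i, F i = G then (h.choose : Fin t).val else 0
    with hr
  have hrval : ∀ {G : Finset α} (i : Fin t), F i = G → r G = i.val := by
    intro G i hi
    have hex : ∃ i, F i = G := ⟨i, hi⟩
    have := hex.choose_spec
    rw [hr]; simp only [dif_pos hex]
    exact congrArg Fin.val (hFinj (this.trans hi.symm))
  refine ⟨r, ?_, ?_⟩
  · intro A hA B hB hAB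
    obtain ⟨i, hi⟩ := (hmem A).mp hA
    obtain ⟨j, hj⟩ := (hmem B).mp hB
    rw [hrval i hi, hrval j hj] at hAB
    rw [← hi, ← hj]
    exact congrArg F (Fin.ext hAB)
  · intro A hA B hB hBA
    obtain ⟨i, hi⟩ := (hmem A).mp hA
    obtain ⟨j, hj⟩ := (hmem B).mp hB
    rw [hrval i hi, hrval j hj] at hBA
    obtain ⟨l, hl, k, hki, hkl⟩ := hadm i j hBA
    rw [hi, hj] at hl
    refine ⟨l, hl, F k, (hmem _).mpr ⟨k, rfl⟩, ?_, by rw [hi] at hkl; exact hkl⟩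
    rw [hrval k rfl, hrval i hi]; exact hki

end AdmissibleHelpers

/-- If the complement of the `d`-clutter `C` admits an admissible order, then
so do: (i) the complement of the ascent `C⁺`; (ii) `C̄ ∪ {F}` for each `F ∈ SMS(C⁺)`;
(iii) the complement of `C − v` (within `(d+1)`-subsets of `V \ {v}`) for each `v ∈ V`. -/
theorem admissible_order_stable (V : Finset α) (d : ℕ) (C : Finset (Finset α))
    (hC : IsClutter V (d + 1) C)
    (h : HasAdmissibleOrder (compClutter V (d + 1) C)) :
    HasAdmissibleOrder (compClutter V (d + 2) (ascent V (d + 1) C)) ∧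
      (∀ F : Finset α, IsSMS V (d + 2) (ascent V (d + 1) C) F →
        HasAdmissibleOrder (insert F (compClutter V (d + 1) C))) ∧
      ∀ v ∈ V, HasAdmissibleOrder (compClutter (V.erase v) (d + 1) (delVert C v)) := by
  classical
  set D := compClutter V (d + 1) C with hD
  have hDmem : ∀ {G : Finset α}, G ∈ D → G ⊆ V ∧ G.card = d + 1 ∧ G ∉ C := by
    intro G hG
    rw [hD, compClutter, Finset.mem_sdiff, Finset.mem_powersetCard] at hG
    tauto
  have hDmem' : ∀ {G : Finset α}, G ⊆ V → G.card = d + 1 → G ∉ C → G ∈ D := by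
    intro G h1 h2 h3
    rw [hD, compClutter, Finset.mem_sdiff, Finset.mem_powersetCard]
    exact ⟨⟨h1, h2⟩, h3⟩
  have hasc : ∀ A : Finset α, A ∈ ascent V (d + 1) C ↔
      (A ⊆ V ∧ A.card = d + 2 ∧ ∀ H ⊆ A, H.card = d + 1 → H ∈ C) := by
    intro A
    rw [ascent, Finset.mem_filter, Finset.mem_powersetCard]
    constructor
    · rintro ⟨⟨h1, h2⟩, h3⟩
      exact ⟨h1, h2, fun H hH hHc => h3 (Finset.mem_powersetCard.mpr ⟨hH, hHc⟩)⟩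
    · rintro ⟨h1, h2, h3⟩
      refine ⟨⟨h1, h2⟩, fun H hH => ?_⟩
      rw [Finset.mem_powersetCard] at hH
      exact h3 H hH.1 hH.2
  obtain ⟨r, hinj, hadm⟩ := exists_rank_of_hasAdmissibleOrder D h
  refine ⟨?_, ?_, ?_⟩
  · -- Part (i)
    set E := compClutter V (d + 2) (ascent V (d + 1) C) with hE
    have hEmem : ∀ {A : Finset α}, A ∈ E ↔ (A ⊆ V ∧ A.card = d + 2 ∧ ∃ H ∈ D, H ⊆ A) := by
      intro A
      rw [hE, compClutter, Finset.mem_sdiff, Finset.mem_powersetCard]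
      constructor
      · rintro ⟨⟨hAV, hAc⟩, hna⟩
        refine ⟨hAV, hAc, ?_⟩
        by_contra hno
        push_neg at hno
        apply hna
        rw [hasc]
        refine ⟨hAV, hAc, fun H hH hHc => ?_⟩
        by_contra hHC
        exact hno H (hDmem' (hH.trans hAV) hHc hHC) hH
      · rintro ⟨hAV, hAc, H, hH, hHA⟩
        refine ⟨⟨hAV, hAc⟩, fun hmem => ?_⟩
        rw [hasc] at hmem
        exact (hDmem hH).2.2 (hmem.2.2 H hHA (hDmem hH).2.1)
    set c := E.card with hc
    set rmu : Finset α → ℕ := fun A => sInf (r '' {H | H ∈ D ∧ H ⊆ A}) with hrmu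
    have hmu_le : ∀ {A H : Finset α}, H ∈ D → H ⊆ A → rmu A ≤ r H := by
      intro A H hH hHA
      exact Nat.sInf_le ⟨H, ⟨hH, hHA⟩, rfl⟩
    have hmu_mem : ∀ {A : Finset α}, A ∈ E → ∃ H ∈ D, H ⊆ A ∧ r H = rmu A := by
      intro A hA
      obtain ⟨-, -, H, hH, hHA⟩ := hEmem.mp hA
      have hne : (r '' {H | H ∈ D ∧ H ⊆ A}).Nonempty := ⟨r H, ⟨H, ⟨hH, hHA⟩, rfl⟩⟩
      obtain ⟨H', ⟨h1, h2⟩, h3⟩ := Nat.sInf_mem hne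
      exact ⟨H', h1, h2, h3⟩
    set iota : Finset α → ℕ := fun A => List.idxOf A E.toList with hiota
    have hiota_lt : ∀ {A : Finset α}, A ∈ E → iota A < c := by
      intro A hA
      have := List.idxOf_lt_length_iff.mpr (Finset.mem_toList.mpr hA)
      simpa [hiota, hc, Finset.length_toList] using this
    have hiota_inj : ∀ {A B : Finset α}, A ∈ E → B ∈ E → iota A = iota B → A = B := by
      intro A B hA hB hAB
      exact (List.idxOf_inj (Finset.mem_toList.mpr hA)).mp hAB
    set rho : Finset α → ℕ := fun A => rmu A * c + iota A with hrho
    have hrho_mono : ∀ {A B : Finset α}, A ∈ E → rmu A < rmu B → rho A < rho B := by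
      intro A B hA hlt
      exact mixed_lt' (hiota_lt hA) hlt
    have hle2 : ∀ {A B : Finset α}, A ∈ E → B ∈ E → rho B < rho A → rmu B ≤ rmu A := by
      intro A B hA hB hBA
      by_contra hcon
      push_neg at hcon
      have := hrho_mono hA hcon
      omega
    apply hasAdmissibleOrder_of_rank _ rho
    · intro A hA B hB hAB
      have h1 : rmu A = rmu B := by
        rcases Nat.lt_trichotomy (rmu A) (rmu B) with hlt | heq | hlt
        · have := hrho_mono hA hlt; omega
        · exact heq
        · have := hrho_mono hB hlt; omega
      have h2 : iota A = iota B := by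
        rw [hrho] at hAB
        simp only [h1] at hAB
        omega
      exact hiota_inj hA hB h2
    · intro A hA B hB hBA
      have hmuBA := hle2 hA hB hBA
      obtain ⟨HA, hHA, hHAA, hrHA⟩ := hmu_mem hA
      obtain ⟨HB, hHB, hHBB, hrHB⟩ := hmu_mem hB
      obtain ⟨hAV, hAc, -⟩ := hEmem.mp hA
      obtain ⟨hBV, hBc, -⟩ := hEmem.mp hB
      rcases eq_or_lt_of_le hmuBA with heq | hlt
      · -- equal minimal ranks: same minimal circuit, B \ A is a singleton
        have hHeq : HB = HA := hinj _ hHB _ hHA (by rw [hrHB, hrHA, heq])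
        have hBA_ne : B ≠ A := by
          intro heq2
          rw [heq2] at hBA
          omega
        have hsub : HA ⊆ B ∩ A := Finset.subset_inter (hHeq ▸ hHBB) hHAA
        have hcard1 : (B \ A).card = 1 := by
          have h1 : (B \ A).card + (B ∩ A).card = B.card := Finset.card_sdiff_add_card_inter B A
          have h2 : d + 1 ≤ (B ∩ A).card := by
            have := Finset.card_le_card hsub
            rw [(hDmem hHA).2.1] at this
            omega
          have h3 : (B \ A).Nonempty := by
            rw [Finset.sdiff_nonempty]
            intro hsub'
            exact hBA_ne (Finset.eq_of_subset_of_card_le hsub' (by omega))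
          have := Finset.card_pos.mpr h3
          omega
        obtain ⟨b, hb⟩ := Finset.card_eq_one.mp hcard1
        exact ⟨b, hb ▸ Finset.mem_singleton_self b, B, hB, hBA, hb⟩
      · -- strictly smaller minimal rank
        obtain ⟨l, hl, K0, hK0, hrK0, hK0A⟩ := hadm HA hHA HB hHB (by rw [hrHA, hrHB]; exact hlt)
        have hK0sub : K0 ⊆ insert l HA := by
          intro x hx
          by_cases hxA : x ∈ HA
          · exact Finset.mem_insert_of_mem hxA
          · have hmem : x ∈ K0 \ HA := Finset.mem_sdiff.mpr ⟨hx, hxA⟩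
            rw [hK0A, Finset.mem_singleton] at hmem
            rw [hmem]
            exact Finset.mem_insert_self _ _
        have hlA : l ∉ A := by
          intro hlA
          have hsub2 : K0 ⊆ A := hK0sub.trans (Finset.insert_subset hlA hHAA)
          have := hmu_le hK0 hsub2
          omega
        have hlB : l ∈ B := hHBB (Finset.mem_sdiff.mp hl).1
        have hAK0 : (A \ K0).Nonempty := by
          rw [Finset.sdiff_nonempty]
          intro hsub2
          have := Finset.card_le_card hsub2
          rw [hAc, (hDmem hK0).2.1] at this
          omega
        obtain ⟨x, hx⟩ := hAK0
        have hxA := (Finset.mem_sdiff.mp hx).1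
        have hxK0 := (Finset.mem_sdiff.mp hx).2
        have hlnotin : l ∉ A.erase x := fun hmem => hlA (Finset.mem_of_mem_erase hmem)
        have hK0K : K0 ⊆ insert l (A.erase x) := by
          intro y hy
          rcases Finset.mem_insert.mp (hK0sub hy) with rfl | hyHA
          · exact Finset.mem_insert_self _ _
          · exact Finset.mem_insert_of_mem
              (Finset.mem_erase.mpr ⟨fun h => hxK0 (h ▸ hy), hHAA hyHA⟩)
        have hKE : insert l (A.erase x) ∈ E := by
          refine hEmem.mpr ⟨?_, ?_, K0, hK0, hK0K⟩
          · exact Finset.insert_subset ((hDmem hHB).1 (Finset.mem_sdiff.mp hl).1)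
              ((Finset.erase_subset _ _).trans hAV)
          · rw [Finset.card_insert_of_notMem hlnotin, Finset.card_erase_of_mem hxA, hAc]
            omega
        have hKA : insert l (A.erase x) \ A = {l} := by
          apply Finset.Subset.antisymm
          · intro y hy
            obtain ⟨hyK, hyA⟩ := Finset.mem_sdiff.mp hy
            rcases Finset.mem_insert.mp hyK with rfl | hmem
            · exact Finset.mem_singleton_self _
            · exact absurd (Finset.mem_of_mem_erase hmem) hyA
          · intro y hy
            rw [Finset.mem_singleton] at hy
            subst hy
            exact Finset.mem_sdiff.mpr ⟨Finset.mem_insert_self _ _, hlA⟩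
        refine ⟨l, Finset.mem_sdiff.mpr ⟨hlB, hlA⟩, insert l (A.erase x), hKE, ?_, hKA⟩
        have h5 : rmu (insert l (A.erase x)) ≤ r K0 := hmu_le hK0 hK0K
        have h6 : rmu (insert l (A.erase x)) < rmu A := by omega
        exact hrho_mono hKE h6
  · -- Part (ii)
    intro F hF
    obtain ⟨⟨hFc, A₀, hA₀, hFA₀⟩, hclq⟩ := hF
    have hFcard : F.card = d + 1 := by omega
    rw [hasc] at hA₀
    have hFV : F ⊆ V := hFA₀.trans hA₀.1
    have hFC : F ∈ C := hA₀.2.2 F hFA₀ hFcard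
    have hFD : F ∉ D := fun hmem => (hDmem hmem).2.2 hFC
    have key : ∀ G ∈ D, ∃ l ∈ G \ F, ∃ H ∈ D, H \ F = {l} := by
      intro G hG
      obtain ⟨hGV, hGc, hGC⟩ := hDmem hG
      by_contra hcon
      push_neg at hcon
      have hins : ∀ l ∈ G \ F, insert l F ∈ ascent V (d + 1) C := by
        intro l hl
        have hlG := (Finset.mem_sdiff.mp hl).1
        have hlF := (Finset.mem_sdiff.mp hl).2
        rw [hasc]
        refine ⟨Finset.insert_subset (hGV hlG) hFV, ?_, ?_⟩
        · rw [Finset.card_insert_of_notMem hlF, hFcard]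
        · intro H hHsub hHc
          by_cases hlH : l ∈ H
          · have hHF : H \ F = {l} := by
              apply Finset.Subset.antisymm
              · intro y hy
                obtain ⟨hyH, hyF⟩ := Finset.mem_sdiff.mp hy
                rcases Finset.mem_insert.mp (hHsub hyH) with rfl | hmem
                · exact Finset.mem_singleton_self _
                · exact absurd hmem hyF
              · intro y hy
                rw [Finset.mem_singleton] at hy
                subst hy
                exact Finset.mem_sdiff.mpr ⟨hlH, hlF⟩
            by_contra hHC
            have hHV : H ⊆ V := hHsub.trans (Finset.insert_subset (hGV hlG) hFV)
            exact hcon l hl H (hDmem' hHV hHc hHC) hHF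
          · have hsub : H ⊆ F := by
              intro y hy
              rcases Finset.mem_insert.mp (hHsub hy) with rfl | hmem
              · exact absurd hy hlH
              · exact hmem
            have : H = F := Finset.eq_of_subset_of_card_le hsub (by omega)
            rw [this]
            exact hFC
      have hGN : G ⊆ closedNbhd V (ascent V (d + 1) C) F := by
        intro g hg
        by_cases hgF : g ∈ F
        · exact Finset.mem_union_left _ hgF
        · exact Finset.mem_union_right _
            (Finset.mem_filter.mpr ⟨hGV hg, hins g (Finset.mem_sdiff.mpr ⟨hg, hgF⟩)⟩)
      have hGF : G ≠ F := fun hmem => hFD (hmem ▸ hG)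
      have hFGm : (F \ G).Nonempty := by
        rw [Finset.sdiff_nonempty]
        intro hsub
        exact hGF (Finset.eq_of_subset_of_card_le hsub (by omega)).symm
      obtain ⟨m, hm⟩ := hFGm
      have hmF := (Finset.mem_sdiff.mp hm).1
      have hmG := (Finset.mem_sdiff.mp hm).2
      have hS : insert m G ⊆ closedNbhd V (ascent V (d + 1) C) F :=
        Finset.insert_subset (Finset.mem_union_left _ hmF) hGN
      have hScard : (insert m G).card = d + 2 := by
        rw [Finset.card_insert_of_notMem hmG]
        omega
      have hSclq : insert m G ∈ ascent V (d + 1) C := hclq.2 _ hS hScard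
      rw [hasc] at hSclq
      exact hGC (hSclq.2.2 G (Finset.subset_insert _ _) hGc)
    set N := D.sup r + 1 with hN
    set r' : Finset α → ℕ := fun G => if G = F then N else r G with hr'
    have hr'D : ∀ {G : Finset α}, G ∈ D → r' G = r G := by
      intro G hG
      rw [hr']
      simp only [if_neg (fun hmem : G = F => hFD (hmem ▸ hG))]
    have hr'F : r' F = N := by rw [hr']; simp
    have hbig : ∀ {G : Finset α}, G ∈ D → r' G < r' F := by
      intro G hG
      rw [hr'D hG, hr'F, hN]
      have := Finset.le_sup (f := r) hG
      omega
    apply hasAdmissibleOrder_of_rank _ r'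
    · intro A hA B hB hAB
      rcases Finset.mem_insert.mp hA with rfl | hA2 <;> rcases Finset.mem_insert.mp hB with rfl | hB2
      · rfl
      · exact absurd hAB.symm (Nat.ne_of_lt (hbig hB2))
      · exact absurd hAB (Nat.ne_of_lt (hbig hA2))
      · exact hinj _ hA2 _ hB2 (by rwa [hr'D hA2, hr'D hB2] at hAB)
    · intro A hA B hB hBA
      rcases Finset.mem_insert.mp hA with rfl | hA2
      · rcases Finset.mem_insert.mp hB with rfl | hB2
        · omega
        · obtain ⟨l, hl, H, hH, hHF⟩ := key B hB2
          exact ⟨l, hl, H, Finset.mem_insert_of_mem hH, hbig hH, hHF⟩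
      · rcases Finset.mem_insert.mp hB with rfl | hB2
        · exact absurd hBA (not_lt.mpr (le_of_lt (hbig hA2)))
        · obtain ⟨l, hl, K, hK, hrK, hKA⟩ :=
            hadm A hA2 B hB2 (by rwa [hr'D hA2, hr'D hB2] at hBA)
          refine ⟨l, hl, K, Finset.mem_insert_of_mem hK, ?_, hKA⟩
          rw [hr'D hK, hr'D hA2]
          exact hrK
  · -- Part (iii)
    intro v hv
    have hset : compClutter (V.erase v) (d + 1) (delVert C v) = D.filter (fun G => v ∉ G) := by
      ext G
      rw [hD, compClutter, compClutter, delVert, Finset.mem_filter, Finset.mem_sdiff,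
        Finset.mem_sdiff, Finset.mem_powersetCard, Finset.mem_powersetCard,
        Finset.subset_erase, Finset.mem_filter]
      tauto
    rw [hset]
    apply hasAdmissibleOrder_of_rank _ r
    · intro A hA B hB
      exact hinj A (Finset.mem_filter.mp hA).1 B (Finset.mem_filter.mp hB).1
    · intro A hA B hB hBA
      rw [Finset.mem_filter] at hA hB
      obtain ⟨l, hl, K, hK, hrK, hKA⟩ := hadm A hA.1 B hB.1 hBA
      refine ⟨l, hl, K, Finset.mem_filter.mpr ⟨hK, ?_⟩, hrK, hKA⟩
      intro hvK
      have hKsub : K ⊆ insert l A := by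
        intro y hy
        by_cases hyA : y ∈ A
        · exact Finset.mem_insert_of_mem hyA
        · have hmem : y ∈ K \ A := Finset.mem_sdiff.mpr ⟨hy, hyA⟩
          rw [hKA, Finset.mem_singleton] at hmem
          rw [hmem]
          exact Finset.mem_insert_self _ _
      rcases Finset.mem_insert.mp (hKsub hvK) with rfl | hmem
      · exact hB.2 (Finset.mem_sdiff.mp hl).1
      · exact hA.2 hmem

end ClutterPaper
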